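/- Let ν ≤ ν' be Newton vectors in ℚⁿ. Then 2·𝐀(ν,ν') − Σ_{j=1}^{n−1} (⌊P_{ν'}(j)⌋ − ⌊P_ν(j)⌋) = 𝐢(ν,ν') + 𝐛₁(ν,ν'). (For GL_n the left-hand side is the essential gap Ess-gap([b],[b']) = ⟨ν'−ν, 2ρ⟩ − length([b],[b']) of the corresponding σ-conjugacy classes; so Ess-gap([b],[b']) = 𝐢 + 𝐛₁.) -/

import Mathlib

/-- Partial sum `P_ν(j) = ν₁ + ⋯ + ν_j` (0-indexed entries `ν 0, …, ν (n-1)`). -/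
def newtonP (ν : ℕ → ℚ) (j : ℕ) : ℚ := ∑ k ∈ Finset.range j, ν k

/-- A rational number is an integer. -/
def IsIntQ (q : ℚ) : Prop := ∃ m : ℤ, (m : ℚ) = q

/-- `ν` is a Newton vector (of length `n`): weakly decreasing, integral total sum, and
integral partial sum at every breakpoint (so the Newton polygon has lattice vertices). -/
def IsNewton (n : ℕ) (ν : ℕ → ℚ) : Prop :=
  (∀ k, k + 1 < n → ν (k + 1) ≤ ν k) ∧
  IsIntQ (newtonP ν n) ∧
  ∀ j, 1 ≤ j → j ≤ n - 1 → ν (j - 1) ≠ ν j → IsIntQ (newtonP ν j)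

/-- The dominance order `ν ≤ ν'` on Newton vectors. -/
def NewtonLE (n : ℕ) (ν ν' : ℕ → ℚ) : Prop :=
  newtonP ν n = newtonP ν' n ∧ ∀ j, 1 ≤ j → j ≤ n - 1 → newtonP ν j ≤ newtonP ν' j

/-- `𝐢(ν,ν')`: the number of lattice points strictly between the two Newton polygons. -/
noncomputable def nI (n : ℕ) (ν ν' : ℕ → ℚ) : ℕ :=
  Set.ncard {p : ℕ × ℤ | 1 ≤ p.1 ∧ p.1 ≤ n - 1 ∧
    newtonP ν p.1 < (p.2 : ℚ) ∧ (p.2 : ℚ) < newtonP ν' p.1}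

/-- `𝐛₁(ν,ν')`: lattice points on the lower polygon not lying on the upper one. -/
noncomputable def nB1 (n : ℕ) (ν ν' : ℕ → ℚ) : ℕ :=
  Set.ncard {j : ℕ | 1 ≤ j ∧ j ≤ n - 1 ∧ IsIntQ (newtonP ν j) ∧ newtonP ν j < newtonP ν' j}

/-- `𝐛₂(ν,ν')`: lattice points on the upper polygon not lying on the lower one. -/
noncomputable def nB2 (n : ℕ) (ν ν' : ℕ → ℚ) : ℕ :=
  Set.ncard {j : ℕ | 1 ≤ j ∧ j ≤ n - 1 ∧ IsIntQ (newtonP ν' j) ∧ newtonP ν j < newtonP ν' j}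

/-- `𝐀(ν,ν') = Σ_{j=1}^{n-1} (P_{ν'}(j) − P_ν(j))`, the area between the polygons. -/
def nA (n : ℕ) (ν ν' : ℕ → ℚ) : ℚ :=
  ∑ j ∈ Finset.Icc 1 (n - 1), (newtonP ν' j - newtonP ν j)

/-- `gfr x = fract x - fract (-x)`; it is `2{x}-1` off ℤ and `0` on ℤ. -/
private def gfr (x : ℚ) : ℚ := Int.fract x - Int.fract (-x)

private lemma gfr_intCast (m : ℤ) : gfr (m : ℚ) = 0 := by
  have h : -(m : ℚ) = ((-m : ℤ) : ℚ) := by push_cast; ring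
  simp only [gfr]
  rw [h, Int.fract_intCast, Int.fract_intCast, sub_zero]

private lemma gfr_int_add (m : ℤ) (x : ℚ) : gfr ((m : ℚ) + x) = gfr x := by
  have : -((m:ℚ) + x) = -x - (m:ℚ) := by ring
  simp [gfr, Int.fract_intCast_add, this, Int.fract_sub_intCast]

private lemma isIntQ_iff_fract (q : ℚ) : IsIntQ q ↔ Int.fract q = 0 := by
  constructor
  · rintro ⟨m, rfl⟩; exact Int.fract_intCast m
  · intro h
    refine ⟨⌊q⌋, ?_⟩
    have := Int.self_sub_floor q
    rw [h] at this
    linarith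

private lemma sum_gfr_lin (L : ℕ) (hL : 0 < L) (d : ℤ) :
    ∑ t ∈ Finset.range L, gfr ((t : ℚ) * ((d : ℚ) / (L : ℚ))) = 0 := by
  have hL0 : (L : ℚ) ≠ 0 := by exact_mod_cast hL.ne'
  set f : ℕ → ℚ := fun t => Int.fract ((t : ℚ) * ((d : ℚ) / (L : ℚ))) with hf
  have key : ∀ t : ℕ, t ≤ L → Int.fract (-((t : ℚ) * ((d : ℚ) / (L : ℚ)))) = f (L - t) := by
    intro t ht
    have hcast : ((L - t : ℕ) : ℚ) = (L : ℚ) - (t : ℚ) := by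
      push_cast [Nat.cast_sub ht]; ring
    have : ((L - t : ℕ) : ℚ) * ((d : ℚ) / (L : ℚ))
        = -((t : ℚ) * ((d : ℚ) / (L : ℚ))) + (d : ℚ) := by
      rw [hcast]; field_simp; ring
    rw [hf]
    simp only [this]
    rw [add_comm, Int.fract_intCast_add]
  have h1 : ∑ t ∈ Finset.range L, Int.fract (-((t : ℚ) * ((d : ℚ) / (L : ℚ))))
      = ∑ t ∈ Finset.range L, f (L - t) := by
    refine Finset.sum_congr rfl fun t ht => key t ?_
    exact (Finset.mem_range.mp ht).le
  have h2 : ∑ t ∈ Finset.range L, f (L - t) = ∑ t ∈ Finset.range L, f (t + 1) := by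
    have := Finset.sum_range_reflect (fun j => f (j + 1)) L
    rw [← this]
    refine Finset.sum_congr rfl fun t ht => ?_
    have ht' := Finset.mem_range.mp ht
    congr 1
    omega
  have h3 : ∑ t ∈ Finset.range L, f (t + 1) = ∑ t ∈ Finset.range L, f t := by
    have e1 : ∑ t ∈ Finset.range (L + 1), f t = ∑ t ∈ Finset.range L, f (t + 1) + f 0 :=
      Finset.sum_range_succ' f L
    have e2 : ∑ t ∈ Finset.range (L + 1), f t = ∑ t ∈ Finset.range L, f t + f L :=
      Finset.sum_range_succ f L
    have hf0 : f 0 = 0 := by simp [hf]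
    have hfL : f L = 0 := by
      have : ((L : ℚ)) * ((d : ℚ) / (L : ℚ)) = (d : ℚ) := by field_simp
      simp [hf, this, Int.fract_intCast]
    rw [hf0] at e1; rw [hfL] at e2
    linarith [e1, e2]
  simp only [gfr, Finset.sum_sub_distrib]
  rw [h1, h2, h3, sub_self]

private lemma sum_gfr : ∀ (n : ℕ) (ν : ℕ → ℚ), IsNewton n ν →
    ∑ j ∈ Finset.range n, gfr (newtonP ν j) = 0 := by
  intro n
  induction n using Nat.strong_induction_on with
  | _ n ih =>
    intro ν hν
    rcases Nat.eq_zero_or_pos n with rfl | hn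
    · simp
    classical
    obtain ⟨hdec, hint, hbrk⟩ := hν
    have h0 : IsIntQ (newtonP ν 0) := ⟨0, by simp [newtonP]⟩
    obtain ⟨a, ha, hab, hmax⟩ : ∃ a, IsIntQ (newtonP ν a) ∧ a ≤ n - 1 ∧
        ∀ j, a < j → j ≤ n - 1 → ¬ IsIntQ (newtonP ν j) := by
      refine ⟨Nat.findGreatest (fun j => IsIntQ (newtonP ν j)) (n - 1), ?_,
        Nat.findGreatest_le _, ?_⟩
      · exact Nat.findGreatest_spec (P := fun j => IsIntQ (newtonP ν j)) (Nat.zero_le _) h0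
      · intro j h1 h2
        exact Nat.findGreatest_is_greatest (P := fun j => IsIntQ (newtonP ν j)) h1 h2
    have han : a < n := by omega
    have hstep : ∀ j, a < j → j ≤ n - 1 → ν (j - 1) = ν j := by
      intro j h1 h2
      by_contra hne
      exact hmax j h1 h2 (hbrk j (by omega) h2 hne)
    have hconst : ∀ k, a ≤ k → k ≤ n - 1 → ν k = ν a := by
      intro k
      induction k with
      | zero => intro h1 _; have : a = 0 := by omega
                rw [this]
      | succ m ihm =>
        intro h1 h2
        rcases Nat.lt_or_ge a (m + 1) with h | h
        · have hs := hstep (m + 1) h h2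
          simp only [Nat.add_sub_cancel] at hs
          rw [← hs]
          rcases Nat.eq_or_lt_of_le (by omega : a ≤ m) with he | hlt
          · rw [he]
          · exact ihm (by omega) (by omega)
        · have : a = m + 1 := by omega
          rw [this]
    have hP : ∀ j, a ≤ j → j ≤ n → newtonP ν j = newtonP ν a + ((j - a : ℕ) : ℚ) * ν a := by
      intro j hj1 hj2
      induction j, hj1 using Nat.le_induction with
      | base => simp
      | succ m hm ihm =>
        have hm' : m ≤ n := by omega
        have : newtonP ν (m + 1) = newtonP ν m + ν m := by
          simp [newtonP, Finset.sum_range_succ]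
        rw [this, ihm (by omega)]
        have hνm : ν m = ν a := hconst m hm (by omega)
        have hcast : ((m + 1 - a : ℕ) : ℚ) = ((m - a : ℕ) : ℚ) + 1 := by
          push_cast [Nat.cast_sub hm, Nat.cast_sub (by omega : a ≤ m + 1)]
          ring
        rw [hνm, hcast]
        ring
    -- truncated newton vector
    have hNa : IsNewton a ν := by
      refine ⟨fun k hk => hdec k (by omega), ha, fun j h1 h2 hne => hbrk j h1 (by omega) hne⟩
    have hhead : ∑ j ∈ Finset.range a, gfr (newtonP ν j) = 0 := ih a han ν hNa
    -- tail
    obtain ⟨pa, hpa⟩ := ha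
    obtain ⟨pn, hpn⟩ := hint
    have hL : 0 < n - a := by omega
    have hLQ : ((n - a : ℕ) : ℚ) ≠ 0 := by
      exact_mod_cast hL.ne'
    have hνa : ν a = ((pn - pa : ℤ) : ℚ) / ((n - a : ℕ) : ℚ) := by
      have hPn := hP n (by omega) le_rfl
      have hd2 : ((pn - pa : ℤ) : ℚ) = ((n - a : ℕ) : ℚ) * ν a := by
        push_cast
        rw [hpa, hpn, hPn]
        ring
      rw [eq_div_iff hLQ, hd2]
      ring
    have htail : ∑ j ∈ Finset.Ico a n, gfr (newtonP ν j) = 0 := by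
      rw [Finset.sum_Ico_eq_sum_range]
      have heq : ∀ t ∈ Finset.range (n - a), gfr (newtonP ν (a + t))
          = gfr ((t : ℚ) * (((pn - pa : ℤ) : ℚ) / ((n - a : ℕ) : ℚ))) := by
        intro t ht
        have ht' := Finset.mem_range.mp ht
        rw [hP (a + t) (by omega) (by omega)]
        have hc : ((a + t - a : ℕ) : ℚ) = (t : ℚ) := by congr 1; omega
        rw [hc, hνa, ← hpa]
        exact gfr_int_add pa _
      rw [Finset.sum_congr rfl heq]
      exact sum_gfr_lin (n - a) hL (pn - pa)
    have hsplit : ∑ j ∈ Finset.range n, gfr (newtonP ν j)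
        = ∑ j ∈ Finset.Ico 0 a, gfr (newtonP ν j) + ∑ j ∈ Finset.Ico a n, gfr (newtonP ν j) := by
      rw [Finset.sum_Ico_consecutive _ (Nat.zero_le a) (le_of_lt han), Finset.range_eq_Ico]
    rw [hsplit, ← Finset.range_eq_Ico, hhead, htail, add_zero]


private lemma fract_eq (x : ℚ) : Int.fract x = x - ⌊x⌋ := (Int.self_sub_floor x).symm

private lemma gfr_of_int (x : ℚ) (h : IsIntQ x) : gfr x = 0 := by
  obtain ⟨m, rfl⟩ := h; exact gfr_intCast m

private lemma gfr_of_not_int (x : ℚ) (h : ¬ IsIntQ x) : gfr x = 2 * Int.fract x - 1 := by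
  have hf : Int.fract x ≠ 0 := fun hf => h ((isIntQ_iff_fract x).mpr hf)
  rw [gfr, Int.fract_neg hf]
  ring

private lemma ceil_of_not_int (x : ℚ) (h : ¬ IsIntQ x) : (⌈x⌉ : ℤ) = ⌊x⌋ + 1 := by
  have h1 : ⌈x⌉ ≤ ⌊x⌋ + 1 := Int.ceil_le_floor_add_one x
  have h2 : ⌊x⌋ < ⌈x⌉ := by
    rw [Int.lt_ceil]
    rcases lt_or_eq_of_le (Int.floor_le x) with h' | h'
    · exact h'
    · exact absurd ⟨⌊x⌋, h'⟩ h
  omega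

attribute [local instance] Classical.propDecidable

private lemma col_key (a b : ℚ) (hab : a ≤ b) :
    2 * (b - a) - ((⌊b⌋ - ⌊a⌋ : ℤ) : ℚ) =
      ((((⌈b⌉ - ⌊a⌋ - 1).toNat : ℕ) : ℚ) + (if IsIntQ a ∧ a < b then 1 else 0))
        + (gfr b - gfr a) := by
  rcases eq_or_lt_of_le hab with rfl | hlt
  · have h1 : ⌈a⌉ - ⌊a⌋ - 1 ≤ 0 := by
      have := Int.ceil_le_floor_add_one a
      omega
    have h2 : ((⌈a⌉ - ⌊a⌋ - 1).toNat : ℤ) = 0 := by omega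
    have h3 : (((⌈a⌉ - ⌊a⌋ - 1).toNat : ℕ) : ℚ) = 0 := by exact_mod_cast h2
    rw [h3, if_neg (fun h => lt_irrefl a h.2), gfr]
    push_cast
    ring
  · have hne : ¬ (a = b) := ne_of_lt hlt
    have hfl : (⌊a⌋ : ℚ) ≤ a := Int.floor_le a
    have hcl : b ≤ (⌈b⌉ : ℚ) := Int.le_ceil b
    have hlt2 : (⌊a⌋ : ℚ) < (⌈b⌉ : ℚ) := lt_of_le_of_lt hfl (lt_of_lt_of_le hlt hcl)
    have hlt3 : ⌊a⌋ < ⌈b⌉ := by exact_mod_cast hlt2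
    have htn : (((⌈b⌉ - ⌊a⌋ - 1).toNat : ℕ) : ℚ) = ((⌈b⌉ : ℚ) - (⌊a⌋ : ℚ) - 1) := by
      have h4 : ((⌈b⌉ - ⌊a⌋ - 1).toNat : ℤ) = ⌈b⌉ - ⌊a⌋ - 1 := by omega
      exact_mod_cast h4
    rw [htn]
    by_cases hA : IsIntQ a <;> by_cases hB : IsIntQ b
    · obtain ⟨ma, rfl⟩ := hA
      obtain ⟨mb, rfl⟩ := hB
      simp only [Int.floor_intCast, Int.ceil_intCast, gfr_intCast]
      rw [if_pos ⟨⟨ma, rfl⟩, hlt⟩]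
      push_cast
      ring
    · obtain ⟨ma, rfl⟩ := hA
      rw [ceil_of_not_int b hB, gfr_of_not_int b hB, gfr_intCast,
        if_pos ⟨⟨ma, rfl⟩, hlt⟩, fract_eq]
      simp only [Int.floor_intCast]
      push_cast
      ring
    · obtain ⟨mb, rfl⟩ := hB
      rw [if_neg (by tauto), gfr_of_not_int a hA, gfr_intCast, fract_eq]
      simp only [Int.floor_intCast, Int.ceil_intCast]
      push_cast
      ring
    · rw [ceil_of_not_int b hB, gfr_of_not_int b hB, gfr_of_not_int a hA,
        if_neg (by tauto), fract_eq, fract_eq]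
      push_cast
      ring

private lemma nI_eq (n : ℕ) (ν ν' : ℕ → ℚ) :
    nI n ν ν' = ∑ j ∈ Finset.Icc 1 (n - 1), (⌈newtonP ν' j⌉ - ⌊newtonP ν j⌋ - 1).toNat := by
  classical
  have hset : {p : ℕ × ℤ | 1 ≤ p.1 ∧ p.1 ≤ n - 1 ∧
      newtonP ν p.1 < (p.2 : ℚ) ∧ (p.2 : ℚ) < newtonP ν' p.1}
      = ↑((Finset.Icc 1 (n - 1)).biUnion fun j =>
          (Finset.Ioo ⌊newtonP ν j⌋ ⌈newtonP ν' j⌉).map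
            ⟨fun m => (j, m), fun x y h => by simpa using congrArg Prod.snd h⟩) := by
    ext ⟨j, m⟩
    simp only [Set.mem_setOf_eq, Finset.mem_coe, Finset.mem_biUnion, Finset.mem_map,
      Finset.mem_Ioo, Finset.mem_Icc, Function.Embedding.coeFn_mk, Prod.mk.injEq]
    constructor
    · rintro ⟨h1, h2, h3, h4⟩
      exact ⟨j, ⟨h1, h2⟩, m, ⟨Int.floor_lt.mpr h3, Int.lt_ceil.mpr h4⟩, rfl⟩
    · rintro ⟨i, hi, m', hm', rfl, rfl⟩
      exact ⟨hi.1, hi.2, Int.floor_lt.mp hm'.1, Int.lt_ceil.mp hm'.2⟩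
  rw [nI, hset, Set.ncard_coe_finset]
  rw [Finset.card_biUnion]
  · refine Finset.sum_congr rfl fun j hj => ?_
    rw [Finset.card_map, Int.card_Ioo]
  · intro x hx y hy hxy
    simp only [Finset.disjoint_left]
    rintro ⟨j, m⟩ h1 h2
    simp only [Finset.mem_map, Function.Embedding.coeFn_mk, Prod.mk.injEq] at h1 h2
    obtain ⟨m1, _, rfl, rfl⟩ := h1
    obtain ⟨m2, _, h, _⟩ := h2
    exact hxy (by omega)

private lemma nB1_eq (n : ℕ) (ν ν' : ℕ → ℚ) :
    nB1 n ν ν' = ∑ j ∈ Finset.Icc 1 (n - 1),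
      if IsIntQ (newtonP ν j) ∧ newtonP ν j < newtonP ν' j then 1 else 0 := by
  classical
  have hset : {j : ℕ | 1 ≤ j ∧ j ≤ n - 1 ∧ IsIntQ (newtonP ν j) ∧ newtonP ν j < newtonP ν' j}
      = ↑((Finset.Icc 1 (n - 1)).filter fun j =>
          IsIntQ (newtonP ν j) ∧ newtonP ν j < newtonP ν' j) := by
    ext j
    simp only [Set.mem_setOf_eq, Finset.coe_filter, Finset.mem_Icc]
    tauto
  rw [nB1, hset, Set.ncard_coe_finset, Finset.card_filter]

/-- for Newton vectors `ν ≤ ν'` in ℚⁿ,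
`2·𝐀(ν,ν') − Σ_{j=1}^{n−1} (⌊P_{ν'}(j)⌋ − ⌊P_ν(j)⌋) = 𝐢(ν,ν') + 𝐛₁(ν,ν')`
(for `GL_n` the left-hand side is the essential gap `Ess-gap([b],[b'])`). -/
theorem essGap_eq_i_add_b1 (n : ℕ) (hn : 1 ≤ n) (ν ν' : ℕ → ℚ)
    (hν : IsNewton n ν) (hν' : IsNewton n ν') (hle : NewtonLE n ν ν') :
    2 * nA n ν ν' -
      ((∑ j ∈ Finset.Icc 1 (n - 1), (⌊newtonP ν' j⌋ - ⌊newtonP ν j⌋) : ℤ) : ℚ) =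
      (nI n ν ν' : ℚ) + (nB1 n ν ν' : ℚ) := by
  classical
  obtain ⟨hsum, hdom⟩ := hle
  have hz : ∀ (μ : ℕ → ℚ), IsNewton n μ →
      ∑ j ∈ Finset.Icc 1 (n - 1), gfr (newtonP μ j) = 0 := by
    intro μ hμ
    have h1 := sum_gfr n μ hμ
    have h2 : Finset.range n = insert 0 (Finset.Icc 1 (n - 1)) := by
      ext j
      simp only [Finset.mem_range, Finset.mem_insert, Finset.mem_Icc]
      omega
    rw [h2, Finset.sum_insert (by simp)] at h1
    have h0 : gfr (newtonP μ 0) = 0 := by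
      have : newtonP μ 0 = ((0 : ℤ) : ℚ) := by simp [newtonP]
      rw [this, gfr_intCast]
    rw [h0, zero_add] at h1
    exact h1
  have main : ∑ j ∈ Finset.Icc 1 (n - 1),
      (2 * (newtonP ν' j - newtonP ν j) - ((⌊newtonP ν' j⌋ - ⌊newtonP ν j⌋ : ℤ) : ℚ))
      = ∑ j ∈ Finset.Icc 1 (n - 1),
        ((((⌈newtonP ν' j⌉ - ⌊newtonP ν j⌋ - 1).toNat : ℕ) : ℚ)
          + (if IsIntQ (newtonP ν j) ∧ newtonP ν j < newtonP ν' j then 1 else 0)) := by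
    have hcong : ∑ j ∈ Finset.Icc 1 (n - 1),
        (2 * (newtonP ν' j - newtonP ν j) - ((⌊newtonP ν' j⌋ - ⌊newtonP ν j⌋ : ℤ) : ℚ))
        = ∑ j ∈ Finset.Icc 1 (n - 1),
          (((((⌈newtonP ν' j⌉ - ⌊newtonP ν j⌋ - 1).toNat : ℕ) : ℚ)
            + (if IsIntQ (newtonP ν j) ∧ newtonP ν j < newtonP ν' j then 1 else 0))
            + (gfr (newtonP ν' j) - gfr (newtonP ν j))) := by
      refine Finset.sum_congr rfl fun j hj => ?_
      have hj' := Finset.mem_Icc.mp hj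
      exact col_key (newtonP ν j) (newtonP ν' j) (hdom j hj'.1 hj'.2)
    rw [hcong, Finset.sum_add_distrib, Finset.sum_sub_distrib, hz ν' hν', hz ν hν]
    ring
  rw [nI_eq, nB1_eq, nA]
  push_cast [Finset.mul_sum] at main ⊢
  rw [← Finset.sum_sub_distrib, main, Finset.sum_add_distrib]
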